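/- Let D be an α-log-Lipschitz distribution on {0,1}^n and φ a conjunction of d literals. Set η = 1/(1+α). For all 0 < ε < 1/2 and ρ ≥ 0, if d ≥ max{(4/η²) log(1/ε), 2ρ/η}, then the probability over x ∼ D that there exists y within Hamming distance ρ of x with y ⊨ φ is at most ε. -/

import Mathlib

open Finset

/-- Probability of an event under a weight function `D` on `ι → Bool`. -/
noncomputable def pr {ι : Type*} [Fintype ι] [DecidableEq ι] (D : (ι → Bool) → ℝ)
    (P : (ι → Bool) → Prop) : ℝ := by
  classical exact ∑ x, if P x then D x else 0

/-- `D` is a probability distribution with full support. -/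
def IsDistribution {ι : Type*} [Fintype ι] [DecidableEq ι] (D : (ι → Bool) → ℝ) : Prop :=
  (∀ x, 0 < D x) ∧ ∑ x, D x = 1

/-- `D` is `α`-log-Lipschitz: points at Hamming distance 1 have log-probabilities
within `log α`. -/
def LogLipschitz {ι : Type*} [Fintype ι] [DecidableEq ι] (α : ℝ) (D : (ι → Bool) → ℝ) : Prop :=
  ∀ x x' : ι → Bool, hammingDist x x' = 1 →
    |Real.log (D x) - Real.log (D x')| ≤ Real.log α

/-- A conjunction of literals over `{0,1}ⁿ`: `φ i = some b` means the literal
requiring `x i = b` occurs; each variable appears at most once. -/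
def SatConj {n : ℕ} (φ : Fin n → Option Bool) (x : Fin n → Bool) : Prop :=
  ∀ i b, φ i = some b → x i = b

/-- Number of literals of a conjunction. -/
def numLits {n : ℕ} (φ : Fin n → Option Bool) : ℕ :=
  (Finset.univ.filter (fun i => (φ i).isSome)).card

variable {n : ℕ}

lemma hd_flip (x : Fin n → Bool) (i : Fin n) :
    hammingDist x (Function.update x i (!x i)) = 1 := by
  have h : ({j | x j ≠ Function.update x i (!x i) j} : Finset (Fin n)) = {i} := by
    ext j
    by_cases hj : j = i
    · subst hj; simp
    · simp [Function.update_of_ne hj]; exact hj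
  rw [hammingDist, h, card_singleton]

lemma D_flip_le {α : ℝ} (hα : 1 ≤ α) {D : (Fin n → Bool) → ℝ}
    (hD : IsDistribution D) (hL : LogLipschitz α D) (x : Fin n → Bool) (i : Fin n) :
    D x ≤ α * D (Function.update x i (!x i)) := by
  have hα0 : (0:ℝ) < α := lt_of_lt_of_le one_pos hα
  have h := (abs_le.mp (hL x _ (hd_flip x i))).2
  have hx := hD.1 x
  have hy := hD.1 (Function.update x i (!x i))
  have hlog : Real.log (D x) ≤ Real.log (α * D (Function.update x i (!x i))) := by
    rw [Real.log_mul (ne_of_gt hα0) (ne_of_gt hy)]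
    linarith
  have := Real.exp_le_exp.mpr hlog
  rwa [Real.exp_log hx, Real.exp_log (mul_pos hα0 hy)] at this

def viol (φ : Fin n → Option Bool) (x : Fin n → Bool) (i : Fin n) : Bool :=
  (φ i).elim false (fun b => x i != b)

def V (φ : Fin n → Option Bool) (S : Finset (Fin n)) (x : Fin n → Bool) : ℕ :=
  (S.filter (fun i => viol φ x i = true)).card

noncomputable def g (φ : Fin n → Option Bool) (D : (Fin n → Bool) → ℝ)
    (S : Finset (Fin n)) : ℝ :=
  ∑ x, D x * (1/2 : ℝ) ^ (V φ S x)

lemma V_update (φ : Fin n → Option Bool) {S : Finset (Fin n)} {i : Fin n} (hiS : i ∉ S)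
    (x : Fin n → Bool) (c : Bool) : V φ S (Function.update x i c) = V φ S x := by
  unfold V
  congr 1
  apply filter_congr
  intro j hj
  have hji : j ≠ i := fun h => hiS (h ▸ hj)
  simp [viol, Function.update_of_ne hji]

lemma V_insert (φ : Fin n → Option Bool) {S : Finset (Fin n)} {i : Fin n} (hiS : i ∉ S)
    (x : Fin n → Bool) :
    V φ (insert i S) x = V φ S x + (if viol φ x i then 1 else 0) := by
  unfold V
  rw [filter_insert]
  by_cases h : viol φ x i = true
  · rw [if_pos h, card_insert_of_notMem (fun hmem => hiS (mem_filter.mp hmem).1)]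
    simp [h]
  · rw [if_neg h]; simp [h]

lemma g_insert_le {α : ℝ} (hα : 1 ≤ α) {D : (Fin n → Bool) → ℝ}
    (hD : IsDistribution D) (hL : LogLipschitz α D) (φ : Fin n → Option Bool)
    {S : Finset (Fin n)} {i : Fin n} (hiS : i ∉ S) {b : Bool} (hb : φ i = some b) :
    g φ D (insert i S) ≤ (1 - (1 / (1 + α)) / 2) * g φ D S := by
  have hα1 : (0:ℝ) < 1 + α := by linarith
  set flip : (Fin n → Bool) → (Fin n → Bool) := fun x => Function.update x i (!x i) with hflipdef
  have hinv : Function.Involutive flip := by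
    intro x
    simp [hflipdef, Function.update_idem, Function.update_self, Function.update_eq_self]
  have hflipi : ∀ x, flip x i = !x i := fun x => Function.update_self i (!x i) x
  set F : (Fin n → Bool) → ℝ := fun x => D x * (1/2 : ℝ) ^ (V φ (insert i S) x) with hF
  set H : (Fin n → Bool) → ℝ := fun x => D x * (1/2 : ℝ) ^ (V φ S x) with hH
  -- violations at i
  have hviol : ∀ x : Fin n → Bool, viol φ x i = (x i != b) := by
    intro x; simp [viol, hb]
  have hVS_flip : ∀ x, V φ S (flip x) = V φ S x := fun x => V_update φ hiS x (!x i)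
  have hFmatch : ∀ x : Fin n → Bool, x i = b → F x = H x := by
    intro x hx
    simp only [hF, hH, V_insert φ hiS, hviol, hx]
    simp
  have hFflip : ∀ x : Fin n → Bool, x i = b →
      F (flip x) = D (flip x) * (1/2 : ℝ) ^ (V φ S x) * (1/2) := by
    intro x hx
    have h1 : viol φ (flip x) i = true := by
      rw [hviol, hflipi, hx]; cases b <;> rfl
    simp only [hF, V_insert φ hiS, h1, hVS_flip, if_true]
    rw [pow_succ]
    ring
  -- pointwise bound
  have hpoint : ∀ x : Fin n → Bool, x i = b →
      F x + F (flip x) ≤ (1 - (1 / (1 + α)) / 2) * ((1/2 : ℝ) ^ (V φ S x) * (D x + D (flip x))) := by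
    intro x hx
    rw [hFmatch x hx, hFflip x hx, hH]
    have hDle : D x ≤ α * D (flip x) := D_flip_le hα hD hL x i
    have hpow : (0:ℝ) ≤ (1/2 : ℝ) ^ (V φ S x) := by positivity
    have hkey : D x + D (flip x) / 2 ≤ (1 - (1 / (1 + α)) / 2) * (D x + D (flip x)) := by
      have h2 : (1 - (1 / (1 + α)) / 2) * (D x + D (flip x)) - (D x + D (flip x) / 2)
          = (α * D (flip x) - D x) / (2 * (1 + α)) := by
        field_simp
        ring
      have h3 : (0:ℝ) ≤ (α * D (flip x) - D x) / (2 * (1 + α)) :=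
        div_nonneg (by linarith) (by linarith)
      linarith
    calc D x * (1/2:ℝ) ^ (V φ S x) + D (flip x) * (1/2:ℝ) ^ (V φ S x) * (1/2)
        = (1/2:ℝ) ^ (V φ S x) * (D x + D (flip x) / 2) := by ring
      _ ≤ (1/2:ℝ) ^ (V φ S x) * ((1 - (1 / (1 + α)) / 2) * (D x + D (flip x))) :=
          mul_le_mul_of_nonneg_left hkey hpow
      _ = (1 - (1 / (1 + α)) / 2) * ((1/2:ℝ) ^ (V φ S x) * (D x + D (flip x))) := by ring
  have reindex : ∀ G : (Fin n → Bool) → ℝ, ∑ x, G (flip x) = ∑ x, G x := by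
    intro G
    exact Fintype.sum_bijective flip hinv.bijective _ _ (fun x => rfl)
  have hnotb : ∀ x : Fin n → Bool, (¬ x i = b) → (!x i) = b := by
    intro x hx; cases b <;> revert hx <;> cases (x i) <;> simp
  have hbne : ∀ x : Fin n → Bool, x i = b → ¬ ((!x i) = b) := by
    intro x hx; rw [hx]; cases b <;> simp
  calc g φ D (insert i S) = ∑ x, F x := rfl
    _ = ∑ x, ((if x i = b then F x else 0) + (if x i = b then 0 else F x)) := by
        apply sum_congr rfl; intro x _; by_cases hx : x i = b <;> simp [hx]
    _ = (∑ x, if x i = b then F x else 0) + (∑ x, if x i = b then 0 else F x) :=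
        sum_add_distrib
    _ = (∑ x, if x i = b then F x else 0) + (∑ x, if x i = b then F (flip x) else 0) := by
        congr 1
        apply Fintype.sum_bijective flip hinv.bijective
        intro x
        show (if x i = b then 0 else F x) = (if flip x i = b then F (flip (flip x)) else 0)
        rw [hinv x, hflipi]
        by_cases hx : x i = b
        · rw [if_pos hx, if_neg (hbne x hx)]
        · rw [if_neg hx, if_pos (hnotb x hx)]
    _ = ∑ x, (if x i = b then F x + F (flip x) else 0) := by
        rw [← sum_add_distrib]; apply sum_congr rfl; intro x _
        by_cases hx : x i = b <;> simp [hx]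
    _ ≤ ∑ x, (if x i = b then
          (1 - (1 / (1 + α)) / 2) * ((1/2 : ℝ) ^ (V φ S x) * (D x + D (flip x))) else 0) := by
        apply sum_le_sum; intro x _
        by_cases hx : x i = b
        · rw [if_pos hx, if_pos hx]; exact hpoint x hx
        · rw [if_neg hx, if_neg hx]
    _ = (1 - (1 / (1 + α)) / 2) *
          ∑ x, (if x i = b then (1/2 : ℝ) ^ (V φ S x) * (D x + D (flip x)) else 0) := by
        rw [mul_sum]; apply sum_congr rfl; intro x _
        by_cases hx : x i = b <;> simp [hx]
    _ = (1 - (1 / (1 + α)) / 2) *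
          ∑ x, ((if x i = b then H x else 0) +
            (if x i = b then (1/2 : ℝ) ^ (V φ S x) * D (flip x) else 0)) := by
        congr 1; apply sum_congr rfl; intro x _
        by_cases hx : x i = b
        · simp only [if_pos hx, hH]; ring
        · simp [hx]
    _ = (1 - (1 / (1 + α)) / 2) *
          ((∑ x, if x i = b then H x else 0) +
            (∑ x, if x i = b then (1/2 : ℝ) ^ (V φ S x) * D (flip x) else 0)) := by
        rw [sum_add_distrib]
    _ = (1 - (1 / (1 + α)) / 2) *
          ((∑ x, if x i = b then H x else 0) + (∑ x, if x i = b then 0 else H x)) := by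
        congr 2
        apply Fintype.sum_bijective flip hinv.bijective
        intro x
        show (if x i = b then (1/2 : ℝ) ^ (V φ S x) * D (flip x) else 0)
            = (if flip x i = b then 0 else H (flip x))
        rw [hflipi]
        by_cases hx : x i = b
        · rw [if_pos hx, if_neg (hbne x hx)]
          simp only [hH]
          rw [hVS_flip]; ring
        · rw [if_neg hx, if_pos (hnotb x hx)]
    _ = (1 - (1 / (1 + α)) / 2) * ∑ x, H x := by
        congr 1
        rw [← sum_add_distrib]; apply sum_congr rfl; intro x _
        by_cases hx : x i = b <;> simp [hx]
    _ = (1 - (1 / (1 + α)) / 2) * g φ D S := rfl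

lemma g_le_pow {α : ℝ} (hα : 1 ≤ α) {D : (Fin n → Bool) → ℝ}
    (hD : IsDistribution D) (hL : LogLipschitz α D) (φ : Fin n → Option Bool)
    (S : Finset (Fin n)) (hS : ∀ j ∈ S, (φ j).isSome) :
    g φ D S ≤ (1 - (1 / (1 + α)) / 2) ^ S.card := by
  have hα1 : (0:ℝ) < 1 + α := by linarith
  have hc0 : (0:ℝ) ≤ 1 - (1 / (1 + α)) / 2 := by
    have : (1:ℝ) / (1 + α) ≤ 1 := by rw [div_le_one hα1]; linarith
    linarith
  induction S using Finset.induction_on with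
  | empty =>
      have : g φ D ∅ = 1 := by
        unfold g V
        simp only [filter_empty, card_empty, pow_zero, mul_one]
        exact hD.2
      simp [this]
  | @insert i S hiS ih =>
      obtain ⟨b, hb⟩ := Option.isSome_iff_exists.mp (hS i (mem_insert_self i S))
      have ih' := ih (fun j hj => hS j (mem_insert_of_mem hj))
      calc g φ D (insert i S) ≤ (1 - (1 / (1 + α)) / 2) * g φ D S :=
            g_insert_le hα hD hL φ hiS hb
        _ ≤ (1 - (1 / (1 + α)) / 2) * (1 - (1 / (1 + α)) / 2) ^ S.card :=
            mul_le_mul_of_nonneg_left ih' hc0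
        _ = (1 - (1 / (1 + α)) / 2) ^ (insert i S).card := by
            rw [card_insert_of_notMem hiS, pow_succ]; ring

lemma numeric (α ε : ℝ) (hα : 1 ≤ α) (hε0 : 0 < ε) (hε : ε < 1/2) (d ρ : ℕ)
    (h1 : (d:ℝ) ≥ (4 / (1 / (1 + α)) ^ 2) * Real.log (1 / ε))
    (h2 : (d:ℝ) ≥ 2 * (ρ:ℝ) / (1 / (1 + α))) :
    (2:ℝ) ^ ρ * (1 - (1 / (1 + α)) / 2) ^ d ≤ ε := by
  have hα1 : (0:ℝ) < 1 + α := by linarith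
  set η : ℝ := 1 / (1 + α) with hηdef
  have hη0 : 0 < η := by positivity
  have hη2 : η ≤ 1/2 := by rw [hηdef, div_le_div_iff₀ hα1 (by norm_num)]; linarith
  have hc0 : 0 < 1 - η/2 := by linarith
  set L := Real.log (1/ε) with hLdef
  have hL0 : 0 < L := Real.log_pos (by rw [one_div]; exact (one_lt_inv₀ hε0).mpr (by linarith))
  have hρ : (ρ:ℝ) ≤ (d:ℝ) * η / 2 := by
    rw [ge_iff_le, div_le_iff₀ hη0] at h2; linarith
  have h1' : 4 * L ≤ (d:ℝ) * η^2 := by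
    rw [ge_iff_le, div_mul_eq_mul_div, div_le_iff₀ (pow_pos hη0 2)] at h1
    linarith
  have hd4 : 4 * L ≤ (d:ℝ) * η / 2 := by
    nlinarith [mul_nonneg (Nat.cast_nonneg d : (0:ℝ) ≤ d) hη0.le]
  have hlogc : Real.log (1 - η/2) ≤ -(η/2) := by
    have := Real.log_le_sub_one_of_pos hc0; linarith
  have hlog2 : Real.log 2 < 0.6931472 := lt_trans Real.log_two_lt_d9 (by norm_num)
  have hlog2' : (0:ℝ) ≤ Real.log 2 := Real.log_nonneg one_le_two
  have hLε : Real.log ε = -L := by rw [hLdef, one_div, Real.log_inv]; ring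
  have keylog : (ρ:ℝ) * Real.log 2 + (d:ℝ) * Real.log (1 - η/2) ≤ -L := by
    have t1 : (ρ:ℝ) * Real.log 2 ≤ ((d:ℝ) * η / 2) * Real.log 2 :=
      mul_le_mul_of_nonneg_right hρ hlog2'
    have t2 : (d:ℝ) * Real.log (1 - η/2) ≤ (d:ℝ) * (-(η/2)) :=
      mul_le_mul_of_nonneg_left hlogc (Nat.cast_nonneg d)
    have hX0 : (0:ℝ) ≤ (d:ℝ) * η / 2 := by positivity
    have t3 : ((d:ℝ) * η / 2) * Real.log 2 ≤ ((d:ℝ) * η / 2) * 0.6931472 :=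
      mul_le_mul_of_nonneg_left hlog2.le hX0
    have t4 : ((d:ℝ) * η / 2) * (-(0.3068528:ℝ)) ≤ (4 * L) * (-(0.3068528:ℝ)) :=
      mul_le_mul_of_nonpos_right hd4 (by norm_num)
    nlinarith
  have hpos : 0 < (2:ℝ) ^ ρ * (1 - η/2) ^ d := by positivity
  have hloggoal : Real.log ((2:ℝ) ^ ρ * (1 - η/2) ^ d) ≤ Real.log ε := by
    rw [Real.log_mul (by positivity) (by positivity), Real.log_pow, Real.log_pow, hLε]
    push_cast
    exact keylog
  have := Real.exp_le_exp.mpr hloggoal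
  rwa [Real.exp_log hpos, Real.exp_log hε0] at this


theorem conjunction_expansion_bound {n : ℕ} (α : ℝ) (hα : 1 ≤ α)
    (D : (Fin n → Bool) → ℝ) (hD : IsDistribution D) (hL : LogLipschitz α D)
    (φ : Fin n → Option Bool) (d ρ : ℕ) (hd : numLits φ = d)
    (ε : ℝ) (hε0 : 0 < ε) (hε : ε < 1 / 2)
    (hdge : (d : ℝ) ≥ max ((4 / (1 / (1 + α)) ^ 2) * Real.log (1 / ε))
        (2 * (ρ : ℝ) / (1 / (1 + α)))) :
    pr D (fun x => ∃ y, hammingDist x y ≤ ρ ∧ SatConj φ y) ≤ ε := by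
  classical
  set lits : Finset (Fin n) := Finset.univ.filter (fun i => (φ i).isSome) with hlits
  have hcard : lits.card = d := hd
  have hsome : ∀ j ∈ lits, (φ j).isSome := fun j hj => (mem_filter.mp hj).2
  -- event implies few violations
  have himp : ∀ x : Fin n → Bool, (∃ y, hammingDist x y ≤ ρ ∧ SatConj φ y) →
      V φ lits x ≤ ρ := by
    rintro x ⟨y, hdist, hsat⟩
    refine le_trans ?_ hdist
    rw [hammingDist]
    apply card_le_card
    intro j hj
    rw [mem_filter] at hj
    obtain ⟨hj1, hj2⟩ := hj
    obtain ⟨b, hb⟩ := Option.isSome_iff_exists.mp (hsome j hj1)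
    have hyj : y j = b := hsat j b hb
    have hxj : x j ≠ b := by
      simp only [viol, hb, Option.elim] at hj2
      simpa using hj2
    simp only [mem_filter, mem_univ, true_and]
    rw [hyj]; exact hxj
  have hDpos := hD.1
  -- Markov chain of inequalities
  have step1 : pr D (fun x => ∃ y, hammingDist x y ≤ ρ ∧ SatConj φ y)
      ≤ ∑ x, (2:ℝ) ^ ρ * (D x * (1/2 : ℝ) ^ (V φ lits x)) := by
    unfold pr
    apply sum_le_sum
    intro x _
    by_cases hE : ∃ y, hammingDist x y ≤ ρ ∧ SatConj φ y
    · rw [if_pos hE]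
      have hV := himp x hE
      have hpow : (1/2 : ℝ) ^ ρ ≤ (1/2 : ℝ) ^ (V φ lits x) :=
        pow_le_pow_of_le_one (by norm_num) (by norm_num) hV
      have h1 : (1:ℝ) = (2:ℝ) ^ ρ * (1/2 : ℝ) ^ ρ := by
        rw [← mul_pow]; norm_num
      calc D x = D x * ((2:ℝ) ^ ρ * (1/2 : ℝ) ^ ρ) := by rw [← h1, mul_one]
        _ ≤ D x * ((2:ℝ) ^ ρ * (1/2 : ℝ) ^ (V φ lits x)) := by
            apply mul_le_mul_of_nonneg_left _ (hDpos x).le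
            exact mul_le_mul_of_nonneg_left hpow (by positivity)
        _ = (2:ℝ) ^ ρ * (D x * (1/2 : ℝ) ^ (V φ lits x)) := by ring
    · rw [if_neg hE]
      exact mul_nonneg (by positivity) (mul_nonneg (hDpos x).le (by positivity))
  have step2 : ∑ x, (2:ℝ) ^ ρ * (D x * (1/2 : ℝ) ^ (V φ lits x))
      = (2:ℝ) ^ ρ * g φ D lits := by
    rw [g, mul_sum]
  have step3 : (2:ℝ) ^ ρ * g φ D lits ≤ (2:ℝ) ^ ρ * (1 - (1 / (1 + α)) / 2) ^ d := by
    apply mul_le_mul_of_nonneg_left _ (by positivity)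
    have := g_le_pow hα hD hL φ lits hsome
    rwa [hcard] at this
  have hnum := numeric α ε hα hε0 hε d ρ
    ((le_max_left _ _).trans hdge) ((le_max_right _ _).trans hdge)
  calc pr D (fun x => ∃ y, hammingDist x y ≤ ρ ∧ SatConj φ y)
      ≤ ∑ x, (2:ℝ) ^ ρ * (D x * (1/2 : ℝ) ^ (V φ lits x)) := step1
    _ = (2:ℝ) ^ ρ * g φ D lits := step2
    _ ≤ (2:ℝ) ^ ρ * (1 - (1 / (1 + α)) / 2) ^ d := step3
    _ ≤ ε := hnum
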